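/- Let n = 2 and c > 0. There is a constant C (depending on c) such that for all λ ≥ 2, d ∈ (0, 1], and every N ≥ 0, ∫₀^{λ^{-2}} t^{-1} e^{-c d²/t} dt ≤ C_N · log(2 + (λd)^{-1}) · (1 + λd)^{-N}. -/

import Mathlib

open MeasureTheory Real

lemma heat_pt_bound (a : ℝ) (ha : 0 < a) (k : ℕ) {t : ℝ} (ht : 0 < t) :
    t⁻¹ * Real.exp (-a / t) ≤ (Nat.factorial (k+1) : ℝ) / a ^ (k+1) * t ^ k := by
  have hx : (0:ℝ) < a / t := div_pos ha ht
  have h1 : (a/t)^(k+1) / (Nat.factorial (k+1) : ℝ) ≤ Real.exp (a/t) :=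
    by simpa using Real.pow_div_factorial_le_exp (x := a/t) (le_of_lt hx) (k+1)
  have hfac : (0:ℝ) < (Nat.factorial (k+1) : ℝ) := by positivity
  have h0 : (0:ℝ) < (a/t)^(k+1) / (Nat.factorial (k+1) : ℝ) := by positivity
  have h2 : Real.exp (-a/t) ≤ ((a/t)^(k+1) / (Nat.factorial (k+1) : ℝ))⁻¹ := by
    rw [neg_div, Real.exp_neg]
    exact inv_anti₀ h0 h1
  have h3 : t⁻¹ * ((a/t)^(k+1) / (Nat.factorial (k+1) : ℝ))⁻¹ = (Nat.factorial (k+1) : ℝ) / a ^ (k+1) * t ^ k := by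
    field_simp
    rw [div_pow, pow_succ t k]
    field_simp
  calc t⁻¹ * Real.exp (-a / t) ≤ t⁻¹ * ((a/t)^(k+1) / (Nat.factorial (k+1) : ℝ))⁻¹ := by
        exact mul_le_mul_of_nonneg_left h2 (by positivity)
    _ = (Nat.factorial (k+1) : ℝ) / a ^ (k+1) * t ^ k := h3

lemma heat_integrable (a T : ℝ) (ha : 0 < a) (hT : 0 ≤ T) :
    IntervalIntegrable (fun t => t⁻¹ * Real.exp (-a / t)) volume 0 T := by
  rw [intervalIntegrable_iff_integrableOn_Ioc_of_le hT]
  apply Measure.integrableOn_of_bounded (M := a⁻¹) measure_Ioc_lt_top.ne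
  · apply Measurable.aestronglyMeasurable
    fun_prop
  · filter_upwards [ae_restrict_mem measurableSet_Ioc] with t ht
    have h := heat_pt_bound a ha 0 ht.1
    simp only [pow_zero, pow_one, mul_one, Nat.factorial_one] at h
    rw [Real.norm_eq_abs, abs_of_nonneg (mul_nonneg (inv_nonneg.mpr ht.1.le) (Real.exp_nonneg _))]
    simpa using h

lemma heat_integral_le (a T : ℝ) (ha : 0 < a) (hT : 0 < T) (k : ℕ) :
    ∫ t in (0:ℝ)..T, t⁻¹ * Real.exp (-a / t) ≤
      (Nat.factorial (k+1) : ℝ) / a ^ (k+1) * T ^ (k+1) / (k+1) := by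
  have hg : IntervalIntegrable (fun t => (Nat.factorial (k+1) : ℝ) / a ^ (k+1) * t ^ k)
      volume 0 T := ((continuous_const.mul (continuous_pow k)).intervalIntegrable 0 T)
  have h := intervalIntegral.integral_mono_on hT.le (heat_integrable a T ha hT.le) hg
    (fun t htt => by
      rcases eq_or_lt_of_le htt.1 with h0 | h0
      · simp only [← h0, inv_zero, zero_mul]
        exact mul_nonneg (by positivity) (pow_nonneg le_rfl _)
      · exact heat_pt_bound a ha k h0)
  calc ∫ t in (0:ℝ)..T, t⁻¹ * Real.exp (-a / t)
      ≤ ∫ t in (0:ℝ)..T, (Nat.factorial (k+1) : ℝ) / a ^ (k+1) * t ^ k := h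
    _ = (Nat.factorial (k+1) : ℝ) / a ^ (k+1) * (T ^ (k+1) / (k+1)) := by
        rw [intervalIntegral.integral_const_mul, integral_pow]
        ring
    _ = (Nat.factorial (k+1) : ℝ) / a ^ (k+1) * T ^ (k+1) / (k+1) := by ring

lemma heat_integral_le_log (a s T : ℝ) (ha : 0 < a) (hs : 0 < s) (hsT : s ≤ T) :
    ∫ t in (0:ℝ)..T, t⁻¹ * Real.exp (-a / t) ≤ s / a + Real.log (T / s) := by
  have hT : 0 < T := lt_of_lt_of_le hs hsT
  have hint := heat_integrable a T ha hT.le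
  have h1i : IntervalIntegrable (fun t => t⁻¹ * Real.exp (-a / t)) volume 0 s :=
    hint.mono_set (by rw [Set.uIcc_of_le hs.le, Set.uIcc_of_le hT.le]; exact Set.Icc_subset_Icc le_rfl hsT)
  have h2i : IntervalIntegrable (fun t => t⁻¹ * Real.exp (-a / t)) volume s T :=
    hint.mono_set (by rw [Set.uIcc_of_le hsT, Set.uIcc_of_le hT.le]; exact Set.Icc_subset_Icc hs.le le_rfl)
  rw [← intervalIntegral.integral_add_adjacent_intervals h1i h2i]
  have hinv : IntervalIntegrable (fun t : ℝ => t⁻¹) volume s T := by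
    apply intervalIntegral.intervalIntegrable_inv (f := fun x : ℝ => x)
    · intro x hx
      rw [Set.uIcc_of_le hsT] at hx
      exact ne_of_gt (lt_of_lt_of_le hs hx.1)
    · exact continuousOn_id
  gcongr
  · -- ∫ 0..s ≤ s / a
    have h := intervalIntegral.integral_mono_on hs.le h1i
      (intervalIntegrable_const (c := a⁻¹))
      (fun t htt => by
        rcases eq_or_lt_of_le htt.1 with h0 | h0
        · simp [← h0]
          positivity
        · have h := heat_pt_bound a ha 0 h0
          simpa using h)
    simpa [div_eq_mul_inv, mul_comm] using h
  · -- ∫ s..T ≤ log (T/s)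
    have h := intervalIntegral.integral_mono_on hsT h2i hinv
      (fun t htt => by
        have ht : 0 < t := lt_of_lt_of_le hs htt.1
        have : Real.exp (-a / t) ≤ 1 := by
          rw [Real.exp_le_one_iff]
          have : 0 < a / t := div_pos ha ht
          rw [neg_div]
          linarith
        calc t⁻¹ * Real.exp (-a / t) ≤ t⁻¹ * 1 :=
              mul_le_mul_of_nonneg_left this (inv_nonneg.mpr ht.le)
          _ = t⁻¹ := mul_one _)
    rwa [integral_inv_of_pos hs hT] at h

/-- Heat-kernel integral estimate, `n = 2`: for every `N` there is `C` such that for all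
`λ ≥ 2`, `d ∈ (0,1]`, `∫₀^{λ^{-2}} t^{-1} e^{-cd²/t} dt ≤ C · log(2 + (λd)⁻¹) · (1 + λd)^{-N}`. -/
theorem heat_integral_bound_dim_two (c : ℝ) (hc : 0 < c) (N : ℕ) :
    ∃ C > (0:ℝ), ∀ lam ≥ (2:ℝ), ∀ d : ℝ, 0 < d → d ≤ 1 →
      (∫ t in (0:ℝ)..lam ^ (-2 : ℝ), t⁻¹ * Real.exp (-c * d ^ 2 / t)) ≤
        C * Real.log (2 + (lam * d)⁻¹) * (1 + lam * d) ^ (-(N : ℝ)) := by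
  have hlog2 : 0 < Real.log 2 := Real.log_pos (by norm_num)
  set C₁ : ℝ := (Nat.factorial N : ℝ) / c ^ (N+1) * 2 ^ N / Real.log 2 with hC₁
  set C₂ : ℝ := (1 / (c * Real.log 2) + 2) * 2 ^ N with hC₂
  have hC₁pos : 0 < C₁ := by
    have : (0:ℝ) < (Nat.factorial N : ℝ) := by positivity
    positivity
  have hC₂pos : 0 < C₂ := by positivity
  refine ⟨C₁ + C₂, by positivity, ?_⟩
  intro lam hlam d hd hd1
  have hlam0 : (0:ℝ) < lam := lt_of_lt_of_le two_pos hlam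
  set s : ℝ := lam * d with hs_def
  have hs : 0 < s := mul_pos hlam0 hd
  have ha : 0 < c * d ^ 2 := by positivity
  have hTpos : (0:ℝ) < lam ^ (-2:ℝ) := Real.rpow_pos_of_pos hlam0 _
  have hT : lam ^ (-2:ℝ) = (lam ^ 2)⁻¹ := by
    rw [show (-2:ℝ) = -((2:ℕ):ℝ) by norm_num, Real.rpow_neg hlam0.le, Real.rpow_natCast]
  have hP : (1 + s) ^ (-(N:ℝ)) = ((1 + s) ^ N)⁻¹ := by
    rw [Real.rpow_neg (by positivity), Real.rpow_natCast]
  have hL : Real.log 2 ≤ Real.log (2 + s⁻¹) :=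
    Real.log_le_log two_pos (by have := inv_pos.mpr hs; linarith)
  have hLpos : 0 < Real.log (2 + s⁻¹) := lt_of_lt_of_le hlog2 hL
  have hPpos : 0 < ((1+s)^N)⁻¹ := by positivity
  have hIeq : (∫ t in (0:ℝ)..lam ^ (-2:ℝ), t⁻¹ * Real.exp (-c * d ^ 2 / t))
      = ∫ t in (0:ℝ)..lam ^ (-2:ℝ), t⁻¹ * Real.exp (-(c * d ^ 2) / t) := by
    simp only [neg_mul]
  rw [hIeq, hP]
  rcases le_total 1 s with hcase | hcase
  · -- s ≥ 1 case
    set K : ℝ := (Nat.factorial N : ℝ) / c ^ (N+1) with hK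
    have hKpos : 0 < K := by
      have : (0:ℝ) < (Nat.factorial N : ℝ) := by positivity
      positivity
    have h1 := heat_integral_le (c * d^2) (lam ^ (-2:ℝ)) ha hTpos N
    have hBeq : (Nat.factorial (N+1) : ℝ) / (c * d^2) ^ (N+1) * (lam ^ (-2:ℝ)) ^ (N+1) / (N+1)
        = K * (s ^ (2*(N+1)))⁻¹ := by
      have hfac : (Nat.factorial (N+1) : ℝ) = ((N:ℝ)+1) * Nat.factorial N := by
        push_cast [Nat.factorial_succ]; ring
      rw [hT, hK, hs_def, hfac]
      have hN1 : ((N:ℝ)+1) ≠ 0 := by positivity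
      field_simp
      rw [one_div, inv_pow, mul_pow, pow_mul, pow_mul, ← pow_mul, ← pow_mul, mul_pow]
      field_simp
      ring
    have h2 : (s ^ (2*(N+1)))⁻¹ ≤ (s ^ N)⁻¹ := by
      apply inv_anti₀ (pow_pos hs N)
      exact pow_le_pow_right₀ hcase (by omega)
    have h3 : (s ^ N)⁻¹ ≤ 2 ^ N * ((1+s)^N)⁻¹ := by
      have hsn : (0:ℝ) < s ^ N := pow_pos hs N
      have h1sn : (0:ℝ) < (1+s) ^ N := pow_pos (by linarith) N
      have hkey : (1:ℝ) * (1+s)^N ≤ 2^N * s^N := by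
        rw [one_mul, ← mul_pow]
        exact pow_le_pow_left₀ (by linarith) (by linarith) N
      have := (div_le_div_iff₀ hsn h1sn).mpr hkey
      simpa [div_eq_mul_inv] using this
    calc (∫ t in (0:ℝ)..lam ^ (-2:ℝ), t⁻¹ * Real.exp (-(c * d ^ 2) / t))
        ≤ K * (s ^ (2*(N+1)))⁻¹ := by rw [← hBeq]; exact h1
      _ ≤ K * (s ^ N)⁻¹ := mul_le_mul_of_nonneg_left h2 hKpos.le
      _ ≤ K * (2 ^ N * ((1+s)^N)⁻¹) := mul_le_mul_of_nonneg_left h3 hKpos.le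
      _ = C₁ * Real.log 2 * ((1+s)^N)⁻¹ := by
          rw [hC₁, hK]; field_simp
      _ ≤ C₁ * Real.log (2 + s⁻¹) * ((1+s)^N)⁻¹ := by
          apply mul_le_mul_of_nonneg_right _ hPpos.le
          exact mul_le_mul_of_nonneg_left hL hC₁pos.le
      _ ≤ (C₁ + C₂) * Real.log (2 + s⁻¹) * ((1+s)^N)⁻¹ := by
          apply mul_le_mul_of_nonneg_right _ hPpos.le
          apply mul_le_mul_of_nonneg_right _ hLpos.le
          linarith
  · -- s ≤ 1 case
    have hd2T : d ^ 2 ≤ lam ^ (-2:ℝ) := by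
      rw [hT]
      have hl2 : (0:ℝ) < lam ^ 2 := by positivity
      have hkey : d^2 * lam^2 ≤ 1 := by nlinarith
      calc d^2 = d^2 * lam^2 * (lam^2)⁻¹ := by field_simp
        _ ≤ 1 * (lam^2)⁻¹ := mul_le_mul_of_nonneg_right hkey (by positivity)
        _ = (lam^2)⁻¹ := one_mul _
    have h1 := heat_integral_le_log (c * d^2) (d^2) (lam ^ (-2:ℝ)) ha (by positivity) hd2T
    have he1 : d^2 / (c * d^2) = 1/c := by field_simp
    have he2 : Real.log (lam ^ (-2:ℝ) / d^2) ≤ 2 * Real.log (2 + s⁻¹) := by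
      have harg : lam ^ (-2:ℝ) / d^2 = (s⁻¹)^2 := by
        rw [hT, hs_def]
        field_simp
      rw [harg, show ((s⁻¹)^2 : ℝ) = s⁻¹^(2:ℕ) by norm_num, Real.log_pow]
      have : Real.log s⁻¹ ≤ Real.log (2 + s⁻¹) :=
        Real.log_le_log (inv_pos.mpr hs) (by linarith)
      push_cast
      linarith
    have hIK : (∫ t in (0:ℝ)..lam ^ (-2:ℝ), t⁻¹ * Real.exp (-(c * d ^ 2) / t))
        ≤ (1 / (c * Real.log 2) + 2) * Real.log (2 + s⁻¹) := by
      have hc1 : 1/c ≤ 1 / (c * Real.log 2) * Real.log (2 + s⁻¹) := by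
        have : 1 / (c * Real.log 2) * Real.log 2 = 1/c := by field_simp
        calc 1/c = 1 / (c * Real.log 2) * Real.log 2 := this.symm
          _ ≤ 1 / (c * Real.log 2) * Real.log (2 + s⁻¹) :=
            mul_le_mul_of_nonneg_left hL (by positivity)
      calc (∫ t in (0:ℝ)..lam ^ (-2:ℝ), t⁻¹ * Real.exp (-(c * d ^ 2) / t))
          ≤ d^2 / (c * d^2) + Real.log (lam ^ (-2:ℝ) / d^2) := h1
        _ ≤ 1/c + 2 * Real.log (2 + s⁻¹) := by rw [he1]; linarith
        _ ≤ (1 / (c * Real.log 2) + 2) * Real.log (2 + s⁻¹) := by linarith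
    have hP2 : ((2:ℝ)^N)⁻¹ ≤ ((1+s)^N)⁻¹ := by
      apply inv_anti₀ (pow_pos (by linarith) N)
      exact pow_le_pow_left₀ (by linarith) (by linarith) N
    calc (∫ t in (0:ℝ)..lam ^ (-2:ℝ), t⁻¹ * Real.exp (-(c * d ^ 2) / t))
        ≤ (1 / (c * Real.log 2) + 2) * Real.log (2 + s⁻¹) := hIK
      _ = C₂ * Real.log (2 + s⁻¹) * ((2:ℝ)^N)⁻¹ := by
          rw [hC₂]; field_simp
      _ ≤ C₂ * Real.log (2 + s⁻¹) * ((1+s)^N)⁻¹ := by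
          apply mul_le_mul_of_nonneg_left hP2
          positivity
      _ ≤ (C₁ + C₂) * Real.log (2 + s⁻¹) * ((1+s)^N)⁻¹ := by
          apply mul_le_mul_of_nonneg_right _ hPpos.le
          apply mul_le_mul_of_nonneg_right _ hLpos.le
          linarith
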